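/- Let m ≥ 1 and let E be an m×m integer matrix all of whose entries are even. Let X = [[I, I],[0, I]] and L = [[−I, E],[0, −I]] be 2m×2m integer matrices written in m×m blocks (these satisfy X·L = L·X). Define ℤ-linear maps on row vectors: ∂₁ : ℤ^{2m} × ℤ^{2m} → ℤ^{2m}, ∂₁(v, w) = v·(X − I₂ₘ) + w·(L − I₂ₘ), and ∂₂ : ℤ^{2m} → ℤ^{2m} × ℤ^{2m}, ∂₂(v) = (v·(I₂ₘ − L), v·(X − I₂ₘ)). Then ∂₁ ∘ ∂₂ = 0, and the quotient group ker(∂₁) / image(∂₂) is isomorphic as an abelian group to (ℤ/2)^m. -/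

import Mathlib

open Matrix

/-- Let `X = [[I,I],[0,I]]` and `L = [[-I,E],[0,-I]]` with `E` an integer matrix with
even entries, `∂₁(v, w) = v·(X - I) + w·(L - I)` and `∂₂(v) = (v·(I - L), v·(X - I))`
on row vectors. Then `∂₁ ∘ ∂₂ = 0` and `ker ∂₁ / image ∂₂ ≅ (ℤ/2)^m`. -/
theorem stmt_7 (m : ℕ) (hm : 1 ≤ m) (E : Matrix (Fin m) (Fin m) ℤ)
    (hE : ∀ i j, 2 ∣ E i j)
    (X L : Matrix (Fin m ⊕ Fin m) (Fin m ⊕ Fin m) ℤ)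
    (hX : X = Matrix.fromBlocks 1 1 0 1)
    (hL : L = Matrix.fromBlocks (-1) E 0 (-1))
    (d1 : ((Fin m ⊕ Fin m → ℤ) × (Fin m ⊕ Fin m → ℤ)) →ₗ[ℤ] (Fin m ⊕ Fin m → ℤ))
    (hd1 : ∀ v w : Fin m ⊕ Fin m → ℤ,
      d1 (v, w) = Matrix.vecMul v (X - 1) + Matrix.vecMul w (L - 1))
    (d2 : (Fin m ⊕ Fin m → ℤ) →ₗ[ℤ] ((Fin m ⊕ Fin m → ℤ) × (Fin m ⊕ Fin m → ℤ)))
    (hd2 : ∀ v : Fin m ⊕ Fin m → ℤ,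
      d2 v = (Matrix.vecMul v (1 - L), Matrix.vecMul v (X - 1))) :
    d1.comp d2 = 0 ∧
    Nonempty ((↥(LinearMap.ker d1) ⧸
        Submodule.comap (LinearMap.ker d1).subtype (LinearMap.range d2))
      ≃+ (Fin m → ZMod 2)) := by
  -- pointwise formulas for the three matrix multiplications
  have hone : (1 : Matrix (Fin m ⊕ Fin m) (Fin m ⊕ Fin m) ℤ) = Matrix.fromBlocks 1 0 0 1 :=
    Matrix.fromBlocks_one.symm
  have hvX : ∀ (v : Fin m ⊕ Fin m → ℤ),
      v ᵥ* (X - 1) = Sum.elim (fun _ => (0:ℤ)) (fun j => v (Sum.inl j)) := by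
    intro v
    rw [Matrix.vecMul_sub, Matrix.vecMul_one, hX, Matrix.vecMul_fromBlocks]
    funext j
    cases j with
    | inl j => simp [Matrix.vecMul_one]
    | inr j => simp [Matrix.vecMul_one]
  have hvL : ∀ (w : Fin m ⊕ Fin m → ℤ),
      w ᵥ* (L - 1) = Sum.elim (fun j => -2 * w (Sum.inl j))
        (fun j => ((w ∘ Sum.inl) ᵥ* E) j - 2 * w (Sum.inr j)) := by
    intro w
    rw [Matrix.vecMul_sub, Matrix.vecMul_one, hL, Matrix.vecMul_fromBlocks]
    funext j
    cases j with
    | inl j =>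
      simp only [Sum.elim_inl, Matrix.vecMul_neg, Matrix.vecMul_one, Matrix.vecMul_zero,
        Pi.sub_apply, Pi.add_apply, Pi.neg_apply, Pi.zero_apply, Function.comp_apply]
      ring
    | inr j =>
      simp only [Sum.elim_inr, Matrix.vecMul_neg, Matrix.vecMul_one, Matrix.vecMul_zero,
        Pi.sub_apply, Pi.add_apply, Pi.neg_apply, Pi.zero_apply, Function.comp_apply]
      ring
  have hv1L : ∀ (v : Fin m ⊕ Fin m → ℤ),
      v ᵥ* (1 - L) = Sum.elim (fun j => 2 * v (Sum.inl j))
        (fun j => 2 * v (Sum.inr j) - ((v ∘ Sum.inl) ᵥ* E) j) := by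
    intro v
    have : v ᵥ* (1 - L) = -(v ᵥ* (L - 1)) := by
      rw [← neg_sub L (1 : Matrix (Fin m ⊕ Fin m) (Fin m ⊕ Fin m) ℤ), Matrix.vecMul_neg]
    rw [this, hvL]
    funext j
    cases j with
    | inl j => simp only [Pi.neg_apply, Sum.elim_inl]; ring
    | inr j => simp only [Pi.neg_apply, Sum.elim_inr]; ring
  -- divisibility of (w ᵥ* E) entries
  have hdvdE : ∀ (w : Fin m → ℤ) (j : Fin m), 2 ∣ (w ᵥ* E) j := by
    intro w j
    simp only [Matrix.vecMul, dotProduct]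
    exact Finset.dvd_sum fun k _ => Dvd.dvd.mul_left (hE k j) _
  -- ∂₁ ∘ ∂₂ = 0
  have hcomp : d1.comp d2 = 0 := by
    apply LinearMap.ext
    intro v
    simp only [LinearMap.comp_apply, LinearMap.zero_apply, hd2]
    rw [hd1, hvX (v ᵥ* (1 - L)), hvL (v ᵥ* (X - 1)), hv1L v, hvX v]
    funext j
    cases j with
    | inl j => simp
    | inr j =>
      simp only [Sum.elim_inl, Sum.elim_inr, Pi.add_apply, Pi.zero_apply]
      rw [Sum.elim_comp_inl]
      have h0 : ((fun _ => (0:ℤ)) ᵥ* E) = 0 := Matrix.zero_vecMul E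
      rw [h0]
      simp
  refine ⟨hcomp, ?_⟩
  -- the map ker d1 → (Fin m → ZMod 2)
  let cast2 : ℤ →ₗ[ℤ] ZMod 2 := (Int.castRingHom (ZMod 2)).toAddMonoidHom.toIntLinearMap
  let G : (LinearMap.ker d1) →ₗ[ℤ] (Fin m → ZMod 2) :=
    LinearMap.pi fun i =>
      cast2 ∘ₗ (LinearMap.proj (Sum.inr i)) ∘ₗ (LinearMap.fst ℤ _ _) ∘ₗ (LinearMap.ker d1).subtype
  have hGapp : ∀ (x : LinearMap.ker d1) (i : Fin m),
      G x i = ((x.1.1 (Sum.inr i) : ℤ) : ZMod 2) := fun x i => rfl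
  -- description of the kernel condition
  have hker : ∀ x : LinearMap.ker d1,
      (∀ j, x.1.2 (Sum.inl j) = 0) ∧
      (∀ j, x.1.1 (Sum.inl j) + ((((x.1.2) ∘ Sum.inl) ᵥ* E) j
          - 2 * x.1.2 (Sum.inr j)) = 0) := by
    intro x
    have hx : d1 (x.1.1, x.1.2) = 0 := by
      rw [show (x.1.1, x.1.2) = x.1 from rfl]
      exact x.2
    rw [hd1, hvX, hvL] at hx
    constructor
    · intro j
      have := congrFun hx (Sum.inl j)
      simp only [Sum.elim_inl, Pi.add_apply, Pi.zero_apply] at this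
      omega
    · intro j
      have := congrFun hx (Sum.inr j)
      simpa using this
  have hsurj : Function.Surjective G := by
    intro y
    refine ⟨⟨(Sum.elim (fun _ => (0:ℤ)) (fun i => ((y i).val : ℤ)), 0), ?_⟩, ?_⟩
    · rw [LinearMap.mem_ker, hd1, hvX, hvL]
      funext j
      cases j with
      | inl j => simp
      | inr j => simp [Matrix.zero_vecMul]
    · funext i
      rw [hGapp]
      simp [ZMod.natCast_val, ZMod.cast_id]
  have hkereq : Submodule.comap (LinearMap.ker d1).subtype (LinearMap.range d2)
      = LinearMap.ker G := by
    ext x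
    simp only [Submodule.mem_comap, LinearMap.mem_range, LinearMap.mem_ker,
      Submodule.coe_subtype]
    constructor
    · rintro ⟨u, hu⟩
      funext i
      rw [hGapp, Pi.zero_apply, ZMod.intCast_zmod_eq_zero_iff_dvd]
      have h1 : x.1.1 = u ᵥ* (1 - L) := by rw [← hu, hd2]
      rw [h1, hv1L]
      simp only [Sum.elim_inr]
      exact dvd_sub (Dvd.intro _ rfl) (hdvdE _ i)
    · intro hx
      have heven : ∀ i, 2 ∣ x.1.1 (Sum.inr i) := by
        intro i
        have := congrFun hx i
        rw [hGapp, Pi.zero_apply, ZMod.intCast_zmod_eq_zero_iff_dvd] at this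
        exact_mod_cast this
      obtain ⟨hk1, hk2⟩ := hker x
      -- the preimage
      let a : Fin m → ℤ := fun k => x.1.2 (Sum.inr k)
      have ha : a = fun k => x.1.2 (Sum.inr k) := rfl
      have hdc : ∀ i, 2 ∣ (x.1.1 (Sum.inr i) + (a ᵥ* E) i) :=
        fun i => dvd_add (heven i) (hdvdE a i)
      let c : Fin m → ℤ := fun i => (x.1.1 (Sum.inr i) + (a ᵥ* E) i) / 2
      have hc2 : ∀ i, 2 * c i = x.1.1 (Sum.inr i) + (a ᵥ* E) i := fun i =>
        Int.mul_ediv_cancel' (hdc i)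
      refine ⟨Sum.elim a c, ?_⟩
      rw [hd2, hv1L, hvX]
      have hzero : ((x.1.2) ∘ Sum.inl) = (0 : Fin m → ℤ) := by
        funext k; exact hk1 k
      have hfst : (Sum.elim (fun j => 2 * Sum.elim a c (Sum.inl j))
          (fun j => 2 * Sum.elim a c (Sum.inr j)
            - ((Sum.elim a c ∘ Sum.inl) ᵥ* E) j)) = x.1.1 := by
        funext j
        cases j with
        | inl j =>
          simp only [Sum.elim_inl]
          have h2 := hk2 j
          rw [hzero, Matrix.zero_vecMul] at h2
          simp only [Pi.zero_apply] at h2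
          show 2 * a j = x.1.1 (Sum.inl j)
          simp only [ha]
          omega
        | inr j =>
          simp only [Sum.elim_inr, Sum.elim_comp_inl]
          have := hc2 j
          omega
      have hsnd : (Sum.elim (fun _ => (0:ℤ)) (fun j => Sum.elim a c (Sum.inl j))) = x.1.2 := by
        funext j
        cases j with
        | inl j => simp [(hk1 j).symm]
        | inr j => simp [ha]
      exact Prod.ext hfst hsnd
  exact ⟨((Submodule.quotEquivOfEq _ _ hkereq).trans
    (G.quotKerEquivOfSurjective hsurj)).toAddEquiv⟩
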